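/- Let 𝒜 be a central, essential hyperplane arrangement in a finite-dimensional inner-product vector space V, and let S ⊆ Q(𝒜) be a building set with Q(S)=Q(𝒜). Then for every E ∈ Q(𝒜): (1) S^E is a building set for the restricted arrangement 𝒜^E = {H∩E : H∈𝒜, E⊄H} in E, and (2) S^{E^⊥}_E is a building set for the normal arrangement 𝒜_{V/E} (identifying V/E with E^⊥). -/

import Mathlib

open scoped Classical

noncomputable section

namespace CxArr

/-- `E ∈ Q(𝒜)`: `E` is a proper subspace obtained as an intersection of members of `𝒜`. -/
def QMem {M : Type*} [AddCommGroup M] [Module ℂ M]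
    (𝒜 : Finset (Submodule ℂ M)) (E : Submodule ℂ M) : Prop :=
  ∃ S : Finset (Submodule ℂ M), S ⊆ 𝒜 ∧ S.Nonempty ∧ E = S.inf id

/-- `S` is a building set for the arrangement `𝒜`: for every `E ∈ Q(𝒜)`, letting
`E₁, …, E_k` be the minimal elements of `S_E = {F ∈ S : E ⊆ F}`, one has `E = E₁ ∩ ⋯ ∩ E_k`
and the natural map is an isomorphism of arrangements `𝒜_{V/E} ≅ ⊕ᵢ 𝒜_{V/Eᵢ}`; the latter is
expressed by additivity of codimensions together with the fact that every hyperplane of `𝒜`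
containing `E` contains one of the `Eᵢ`. -/
def IsBuildingSet {M : Type*} [AddCommGroup M] [Module ℂ M] [FiniteDimensional ℂ M]
    (𝒜 S : Finset (Submodule ℂ M)) : Prop :=
  ∀ E : Submodule ℂ M, QMem 𝒜 E →
    (E = (S.filter (fun F => E ≤ F ∧ ∀ F' ∈ S, E ≤ F' → F' ≤ F → F' = F)).inf id) ∧
    (Module.finrank ℂ M - Module.finrank ℂ E =
      ∑ F ∈ S.filter (fun F => E ≤ F ∧ ∀ F' ∈ S, E ≤ F' → F' ≤ F → F' = F),
        (Module.finrank ℂ M - Module.finrank ℂ F)) ∧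
    (∀ H ∈ 𝒜, E ≤ H →
      ∃ F ∈ S.filter (fun F => E ≤ F ∧ ∀ F' ∈ S, E ≤ F' → F' ≤ F → F' = F), F ≤ H)

end CxArr

set_option linter.unusedSectionVars false

namespace St7Aux

open Module Submodule Finset

variable {V : Type} [NormedAddCommGroup V] [InnerProductSpace ℂ V] [FiniteDimensional ℂ V]

lemma inf_image_comap (p : Submodule ℂ V) (T : Finset (Submodule ℂ V)) :
    (T.image (Submodule.comap p.subtype)).inf id = Submodule.comap p.subtype (T.inf id) := by
  classical
  rw [Finset.inf_image]
  induction T using Finset.induction_on with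
  | empty => simp
  | @insert a s ha ih =>
      rw [Finset.inf_insert, Finset.inf_insert, Submodule.comap_inf, ← ih]
      rfl

lemma comap_le_comap (p B B' : Submodule ℂ V) :
    Submodule.comap p.subtype B ≤ Submodule.comap p.subtype B' ↔ p ⊓ B ≤ p ⊓ B' := by
  constructor
  · rintro h x ⟨hxp, hxB⟩
    refine ⟨hxp, ?_⟩
    have := h (show (⟨x, hxp⟩ : p) ∈ Submodule.comap p.subtype B from hxB)
    exact this
  · intro h x hx
    exact (h ⟨x.2, hx⟩).2

lemma comap_inj (p B B' : Submodule ℂ V)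
    (h : Submodule.comap p.subtype B = Submodule.comap p.subtype B') : p ⊓ B = p ⊓ B' :=
  le_antisymm ((comap_le_comap p B B').1 h.le) ((comap_le_comap p B' B).1 h.ge)

lemma finrank_comap (p B : Submodule ℂ V) :
    finrank ℂ (Submodule.comap p.subtype B) = finrank ℂ ↥(p ⊓ B) := by
  conv_rhs => rw [← Submodule.map_comap_subtype]
  rw [Submodule.finrank_map_subtype_eq]

lemma comap_inf_self (p X : Submodule ℂ V) :
    Submodule.comap p.subtype (p ⊓ X) = Submodule.comap p.subtype X := by
  rw [Submodule.comap_inf, Submodule.comap_subtype_self, top_inf_eq]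

lemma exists_min (S : Finset (Submodule ℂ V)) (G : Submodule ℂ V) :
    ∀ n (B : Submodule ℂ V), finrank ℂ B ≤ n → B ∈ S → G ≤ B →
      ∃ F ∈ S.filter (fun F => G ≤ F ∧ ∀ F' ∈ S, G ≤ F' → F' ≤ F → F' = F), F ≤ B := by
  intro n
  induction n with
  | zero =>
      intro B hB hBS hGB
      by_cases h : ∀ F' ∈ S, G ≤ F' → F' ≤ B → F' = B
      · exact ⟨B, Finset.mem_filter.mpr ⟨hBS, hGB, h⟩, le_rfl⟩
      · push_neg at h
        obtain ⟨F', _, _, hF'B, hne⟩ := h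
        have := Submodule.finrank_lt_finrank_of_lt (lt_of_le_of_ne hF'B hne)
        omega
  | succ n ih =>
      intro B hB hBS hGB
      by_cases h : ∀ F' ∈ S, G ≤ F' → F' ≤ B → F' = B
      · exact ⟨B, Finset.mem_filter.mpr ⟨hBS, hGB, h⟩, le_rfl⟩
      · push_neg at h
        obtain ⟨F', hF'S, hGF', hF'B, hne⟩ := h
        have hlt := Submodule.finrank_lt_finrank_of_lt (lt_of_le_of_ne hF'B hne)
        obtain ⟨F, hF, hFB⟩ := ih F' (by omega) hF'S hGF'
        exact ⟨F, hF, hFB.trans hF'B⟩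

lemma finrank_sup_le {α : Type} (T : Finset α) (W : α → Submodule ℂ V) :
    finrank ℂ ↥(T.sup W) ≤ ∑ a ∈ T, finrank ℂ ↥(W a) := by
  classical
  induction T using Finset.induction_on with
  | empty => simp
  | @insert a s ha ih =>
      rw [Finset.sup_insert, Finset.sum_insert ha]
      have h1 := Submodule.finrank_add_le_finrank_add_finrank (W a) (s.sup W)
      omega

lemma indep_erase {α : Type} (T : Finset α) (W : α → Submodule ℂ V)
    (h : finrank ℂ ↥(T.sup W) = ∑ a ∈ T, finrank ℂ ↥(W a)) {a : α} (ha : a ∈ T) :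
    W a ⊓ (T.erase a).sup W = ⊥ := by
  classical
  have h1 : T.sup W = W a ⊔ (T.erase a).sup W := by
    conv_lhs => rw [← Finset.insert_erase ha]
    rw [Finset.sup_insert]
  have h2 : ∑ b ∈ T, finrank ℂ ↥(W b) = finrank ℂ ↥(W a) + ∑ b ∈ T.erase a, finrank ℂ ↥(W b) :=
    (Finset.add_sum_erase _ _ ha).symm
  have h3 := Submodule.finrank_sup_add_finrank_inf_eq (W a) ((T.erase a).sup W)
  have h4 := finrank_sup_le (T.erase a) W
  rw [h1] at h
  have h5 : finrank ℂ ↥(W a ⊓ (T.erase a).sup W) = 0 := by omega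
  exact Submodule.finrank_eq_zero.mp h5

lemma indep_sub {α : Type} (T : Finset α) (W U : α → Submodule ℂ V)
    (hUW : ∀ a ∈ T, U a ≤ W a)
    (h : finrank ℂ ↥(T.sup W) = ∑ a ∈ T, finrank ℂ ↥(W a)) :
    finrank ℂ ↥(T.sup U) = ∑ a ∈ T, finrank ℂ ↥(U a) := by
  classical
  induction T using Finset.induction_on with
  | empty => simp
  | @insert a s ha ih =>
      have hbotW : W a ⊓ s.sup W = ⊥ := by
        have := indep_erase (insert a s) W h (Finset.mem_insert_self a s)
        rwa [Finset.erase_insert ha] at this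
      have hW : finrank ℂ ↥(s.sup W) = ∑ b ∈ s, finrank ℂ ↥(W b) := by
        rw [Finset.sup_insert, Finset.sum_insert ha] at h
        have h3 := Submodule.finrank_sup_add_finrank_inf_eq (W a) (s.sup W)
        rw [hbotW, finrank_bot] at h3
        have h4 := finrank_sup_le s W
        omega
      have ihs := ih (fun b hb => hUW b (Finset.mem_insert_of_mem hb)) hW
      have hbotU : U a ⊓ s.sup U = ⊥ := by
        have hle : U a ⊓ s.sup U ≤ W a ⊓ s.sup W :=
          inf_le_inf (hUW a (Finset.mem_insert_self a s))
            (Finset.sup_mono_fun fun b hb => hUW b (Finset.mem_insert_of_mem hb))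
        rw [hbotW] at hle
        exact le_bot_iff.mp hle
      rw [Finset.sup_insert, Finset.sum_insert ha, ← ihs]
      have h3 := Submodule.finrank_sup_add_finrank_inf_eq (U a) (s.sup U)
      rw [hbotU, finrank_bot] at h3
      omega

lemma component {α : Type} (T : Finset α) (W Y : α → Submodule ℂ V)
    (h : finrank ℂ ↥(T.sup W) = ∑ a ∈ T, finrank ℂ ↥(W a))
    (hY : ∀ b ∈ T, Y b ≤ W b) {a : α} (ha : a ∈ T)
    (X : Submodule ℂ V) (hXW : X ≤ W a) (hXT : X ≤ T.sup Y) : X ≤ Y a := by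
  classical
  intro x hx
  have hT : T.sup Y = Y a ⊔ (T.erase a).sup Y := by
    conv_lhs => rw [← Finset.insert_erase ha]
    rw [Finset.sup_insert]
  have hxT : x ∈ Y a ⊔ (T.erase a).sup Y := by rw [← hT]; exact hXT hx
  rw [Submodule.mem_sup] at hxT
  obtain ⟨y, hy, z, hz, hyz⟩ := hxT
  have hzW : z ∈ (T.erase a).sup W :=
    Finset.sup_mono_fun (fun b hb => hY b (Finset.mem_of_mem_erase hb)) hz
  have hxyW : x - y ∈ W a := sub_mem (hXW hx) (hY a ha hy)
  have hxyz : x - y = z := by rw [← hyz]; abel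
  have hmem : x - y ∈ W a ⊓ (T.erase a).sup W := ⟨hxyW, by rw [hxyz]; exact hzW⟩
  rw [indep_erase T W h ha] at hmem
  have hxy : x = y := sub_eq_zero.mp ((Submodule.mem_bot ℂ).mp hmem)
  rw [hxy]; exact hy

lemma orth_inf (X Y : Submodule ℂ V) : (X ⊓ Y)ᗮ = Xᗮ ⊔ Yᗮ := by
  conv_lhs => rw [← Submodule.orthogonal_orthogonal X, ← Submodule.orthogonal_orthogonal Y]
  rw [Submodule.inf_orthogonal, Submodule.orthogonal_orthogonal]

lemma orth_finset_inf (T : Finset (Submodule ℂ V)) :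
    (T.inf id)ᗮ = T.sup (fun F => Fᗮ) := by
  classical
  induction T using Finset.induction_on with
  | empty => simp [Submodule.top_orthogonal_eq_bot]
  | @insert a s ha ih =>
      rw [Finset.inf_insert, Finset.sup_insert, ← ih]
      exact orth_inf _ _

lemma finrank_orth (X : Submodule ℂ V) :
    finrank ℂ Xᗮ = finrank ℂ V - finrank ℂ X := by
  have := Submodule.finrank_add_finrank_orthogonal X
  omega

lemma split {E B : Submodule ℂ V} (hEB : E ≤ B) : E ⊔ (Eᗮ ⊓ B) = B := by
  refine le_antisymm (sup_le hEB inf_le_right) ?_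
  intro x hx
  have hxs : (x : V) ∈ E ⊔ Eᗮ := by
    rw [Submodule.sup_orthogonal_of_hasOrthogonalProjection]; trivial
  rw [Submodule.mem_sup] at hxs
  obtain ⟨y, hy, z, hz, hyz⟩ := hxs
  have hzB : z ∈ B := by
    have hzx : z = x - y := by rw [← hyz]; abel
    rw [hzx]; exact sub_mem hx (hEB hy)
  exact Submodule.mem_sup.mpr ⟨y, hy, z, ⟨hz, hzB⟩, hyz⟩

lemma orderemb {E B B' : Submodule ℂ V} (hEB : E ≤ B) (hEB' : E ≤ B')
    (h : Eᗮ ⊓ B ≤ Eᗮ ⊓ B') : B ≤ B' := by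
  conv_lhs => rw [← split hEB]
  exact sup_le hEB' (h.trans inf_le_right)

lemma finrank_split {E B : Submodule ℂ V} (hEB : E ≤ B) :
    finrank ℂ B = finrank ℂ E + finrank ℂ ↥(Eᗮ ⊓ B) := by
  have h1 := Submodule.finrank_sup_add_finrank_inf_eq E (Eᗮ ⊓ B)
  have h2 : E ⊓ (Eᗮ ⊓ B) = ⊥ := by
    have hle : E ⊓ (Eᗮ ⊓ B) ≤ E ⊓ Eᗮ := inf_le_inf_left _ inf_le_left
    rw [Submodule.inf_orthogonal_eq_bot] at hle
    exact le_bot_iff.mp hle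
  rw [split hEB, h2, finrank_bot] at h1
  omega

open CxArr

lemma part1 (𝒜 S : Finset (Submodule ℂ V))
    (hbuild : IsBuildingSet 𝒜 S) (E : Submodule ℂ V) (hE : QMem 𝒜 E) :
    IsBuildingSet ((𝒜.filter (fun H => ¬ E ≤ H)).image (Submodule.comap E.subtype))
      ((S.filter (fun B => ¬ E ≤ B)).image (Submodule.comap E.subtype)) := by
  classical
  obtain ⟨TE, hTEsub, hTEne, hTEeq⟩ := hE
  intro E' hE'
  obtain ⟨T', hT'sub, hT'ne, hT'eq⟩ := hE'
  set S' := (S.filter (fun B => ¬ E ≤ B)).image (Submodule.comap E.subtype) with hS'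
  set T : Finset (Submodule ℂ V) :=
    (𝒜.filter (fun H => ¬ E ≤ H)).filter (fun H => Submodule.comap E.subtype H ∈ T') with hTdef
  have hT'img : T' = T.image (Submodule.comap E.subtype) := by
    ext X
    constructor
    · intro hX
      obtain ⟨H, hH, hHX⟩ := Finset.mem_image.mp (hT'sub hX)
      exact Finset.mem_image.mpr ⟨H, Finset.mem_filter.mpr ⟨hH, hHX ▸ hX⟩, hHX⟩
    · intro hX
      obtain ⟨H, hH, rfl⟩ := Finset.mem_image.mp hX
      exact (Finset.mem_filter.mp hH).2
  set G : Submodule ℂ V := E ⊓ T.inf id with hGdef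
  have hGE : G ≤ E := inf_le_left
  have hE'G : E' = Submodule.comap E.subtype G := by
    rw [hT'eq, hT'img, inf_image_comap, hGdef, Submodule.comap_inf,
      Submodule.comap_subtype_self, top_inf_eq]
  have hGQ : QMem 𝒜 G := by
    refine ⟨TE ∪ T, Finset.union_subset hTEsub
      ((Finset.filter_subset _ _).trans (Finset.filter_subset _ _)), ?_, ?_⟩
    · obtain ⟨x, hx⟩ := hTEne; exact ⟨x, Finset.mem_union_left _ hx⟩
    · rw [Finset.inf_union, ← hTEeq, hGdef]
  obtain ⟨hG1, hG2, hG3⟩ := hbuild G hGQ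
  set M := S.filter (fun F => G ≤ F ∧ ∀ F' ∈ S, G ≤ F' → F' ≤ F → F' = F) with hMdef
  have hGleM : ∀ F ∈ M, G ≤ F := fun F hF => (Finset.mem_filter.mp hF).2.1
  have hGorth : Gᗮ = M.sup (fun F => Fᗮ) := by
    conv_lhs => rw [hG1]
    exact orth_finset_inf M
  have hstar : finrank ℂ ↥(M.sup (fun F => Fᗮ)) = ∑ F ∈ M, finrank ℂ ↥(Fᗮ) := by
    rw [← hGorth, finrank_orth, hG2]
    refine Finset.sum_congr rfl fun F hF => ?_
    rw [finrank_orth]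
  have hcover : ∀ B ∈ S, G ≤ B → ∃ F ∈ M, F ≤ B := fun B hB hGB =>
    exists_min S G (finrank ℂ B) B le_rfl hB hGB
  have hEorth : Eᗮ = M.sup (fun F => Eᗮ ⊓ Fᗮ) := by
    refine le_antisymm ?_ (Finset.sup_le fun F hF => inf_le_left)
    have hEeq : Eᗮ = TE.sup (fun H => Hᗮ) := by rw [hTEeq, orth_finset_inf]
    refine le_trans hEeq.le ?_
    refine Finset.sup_le fun H hH => ?_
    have hEH : E ≤ H := by
      conv_lhs => rw [hTEeq]
      exact Finset.inf_le hH
    obtain ⟨F, hFM, hFH⟩ := hG3 H (hTEsub hH) (hGE.trans hEH)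
    exact le_trans (le_inf (Submodule.orthogonal_le hEH) (Submodule.orthogonal_le hFH))
      (Finset.le_sup (f := fun F => Eᗮ ⊓ Fᗮ) hFM)
  have hanti : ∀ F ∈ M, ¬ E ≤ F → ∀ F2 ∈ M, ¬ E ≤ F2 → E ⊓ F2 ≤ E ⊓ F → F2 = F := by
    intro F hFM hFnE F2 hF2M hF2nE hle
    set Y : Submodule ℂ V → Submodule ℂ V := fun l => if l = F2 then F2ᗮ else Eᗮ ⊓ lᗮ with hYdef
    have hYW : ∀ b ∈ M, Y b ≤ bᗮ := by
      intro b _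
      by_cases hb : b = F2
      · subst hb; simp only [hYdef, if_pos rfl]; exact le_rfl
      · simp only [hYdef, if_neg hb]; exact inf_le_right
    have hlY : ∀ l, Eᗮ ⊓ lᗮ ≤ Y l := by
      intro l
      by_cases hl : l = F2
      · subst hl; simp only [hYdef, if_pos rfl]; exact inf_le_right
      · simp only [hYdef, if_neg hl]; exact le_rfl
    have hFle : Fᗮ ≤ M.sup Y := by
      have h1 : (E ⊓ F)ᗮ ≤ (E ⊓ F2)ᗮ := Submodule.orthogonal_le hle
      rw [orth_inf, orth_inf] at h1
      have h2 : Fᗮ ≤ Eᗮ ⊔ F2ᗮ := le_trans le_sup_right h1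
      refine h2.trans (sup_le ?_ ?_)
      · rw [hEorth]
        exact Finset.sup_le fun l hl => (hlY l).trans (Finset.le_sup hl)
      · have hYF2 : Y F2 = F2ᗮ := by simp only [hYdef, if_pos rfl]
        rw [← hYF2]
        exact Finset.le_sup hF2M
    have hcomp := component M (fun l => lᗮ) Y hstar hYW hFM Fᗮ le_rfl hFle
    by_cases hFF : F = F2
    · exact hFF.symm
    · exfalso
      rw [show Y F = Eᗮ ⊓ Fᗮ by simp only [hYdef, if_neg hFF]] at hcomp
      have hFE : Fᗮ ≤ Eᗮ := hcomp.trans inf_le_left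
      have hEF : E ≤ F := by
        have h2 := Submodule.orthogonal_le hFE
        rwa [Submodule.orthogonal_orthogonal, Submodule.orthogonal_orthogonal] at h2
      exact hFnE hEF
  have hinj : ∀ x ∈ M.filter (fun F => ¬ E ≤ F), ∀ y ∈ M.filter (fun F => ¬ E ≤ F),
      Submodule.comap E.subtype x = Submodule.comap E.subtype y → x = y := by
    intro x hx y hy hxy
    obtain ⟨hxM, hxnE⟩ := Finset.mem_filter.mp hx
    obtain ⟨hyM, hynE⟩ := Finset.mem_filter.mp hy
    exact (hanti x hxM hxnE y hyM hynE (comap_inj E x y hxy).ge).symm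
  have hkey : ∀ B : Submodule ℂ V, (E' ≤ Submodule.comap E.subtype B ↔ G ≤ B) := by
    intro B
    rw [hE'G, comap_le_comap, inf_eq_right.mpr hGE]
    exact ⟨fun h => h.trans inf_le_right, fun h => le_inf hGE h⟩
  have hfil : S'.filter (fun F => E' ≤ F ∧ ∀ F'' ∈ S', E' ≤ F'' → F'' ≤ F → F'' = F)
      = (M.filter (fun F => ¬ E ≤ F)).image (Submodule.comap E.subtype) := by
    ext X
    constructor
    · intro hX
      obtain ⟨hXS', hE'X, hminX⟩ := Finset.mem_filter.mp hX
      obtain ⟨B, hB, rfl⟩ := Finset.mem_image.mp hXS'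
      obtain ⟨hBS, hBnE⟩ := Finset.mem_filter.mp hB
      have hGB : G ≤ B := (hkey B).mp hE'X
      obtain ⟨F, hFM, hFB⟩ := hcover B hBS hGB
      have hFnE : ¬ E ≤ F := fun hEF => hBnE (hEF.trans hFB)
      have hFS' : Submodule.comap E.subtype F ∈ S' :=
        Finset.mem_image.mpr ⟨F, Finset.mem_filter.mpr ⟨(Finset.mem_filter.mp hFM).1, hFnE⟩, rfl⟩
      have heq := hminX _ hFS' ((hkey F).mpr (hGleM F hFM)) (Submodule.comap_mono hFB)
      exact Finset.mem_image.mpr ⟨F, Finset.mem_filter.mpr ⟨hFM, hFnE⟩, heq⟩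
    · intro hX
      obtain ⟨F, hFM2, rfl⟩ := Finset.mem_image.mp hX
      obtain ⟨hFM, hFnE⟩ := Finset.mem_filter.mp hFM2
      refine Finset.mem_filter.mpr ⟨Finset.mem_image.mpr
        ⟨F, Finset.mem_filter.mpr ⟨(Finset.mem_filter.mp hFM).1, hFnE⟩, rfl⟩,
        (hkey F).mpr (hGleM F hFM), ?_⟩
      intro X' hX'S' hE'X' hX'F
      obtain ⟨B, hB, rfl⟩ := Finset.mem_image.mp hX'S'
      obtain ⟨hBS, hBnE⟩ := Finset.mem_filter.mp hB
      have hGB : G ≤ B := (hkey B).mp hE'X'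
      obtain ⟨F2, hF2M, hF2B⟩ := hcover B hBS hGB
      have hF2nE : ¬ E ≤ F2 := fun h => hBnE (h.trans hF2B)
      have h1 : E ⊓ B ≤ E ⊓ F := (comap_le_comap E B F).mp hX'F
      have h2 : E ⊓ F2 ≤ E ⊓ F := (inf_le_inf_left _ hF2B).trans h1
      have hF2F : F2 = F := hanti F hFM hFnE F2 hF2M hF2nE h2
      refine le_antisymm hX'F (Submodule.comap_mono ?_)
      rw [← hF2F]; exact hF2B
  refine ⟨?_, ?_, ?_⟩
  · rw [hfil, inf_image_comap]
    have hsplitM : (M.filter (fun F => E ≤ F)).inf id ⊓ (M.filter (fun F => ¬ E ≤ F)).inf id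
        = G := by
      refine le_antisymm ?_ ?_
      · conv_rhs => rw [hG1]
        refine Finset.le_inf fun F hF => ?_
        by_cases hEF : E ≤ F
        · exact inf_le_left.trans (Finset.inf_le (Finset.mem_filter.mpr ⟨hF, hEF⟩))
        · exact inf_le_right.trans (Finset.inf_le (Finset.mem_filter.mpr ⟨hF, hEF⟩))
      · refine le_inf (Finset.le_inf fun F hF => ?_) (Finset.le_inf fun F hF => ?_)
        · exact hGleM F (Finset.mem_filter.mp hF).1
        · exact hGleM F (Finset.mem_filter.mp hF).1
    have hEle : E ≤ (M.filter (fun F => E ≤ F)).inf id :=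
      Finset.le_inf fun F hF => (Finset.mem_filter.mp hF).2
    have hEM2 : E ⊓ (M.filter (fun F => ¬ E ≤ F)).inf id = E ⊓ G := by
      refine le_antisymm ?_ ?_
      · refine le_inf inf_le_left ?_
        refine le_trans ?_ hsplitM.le
        exact le_inf (inf_le_left.trans hEle) inf_le_right
      · refine inf_le_inf_left E ?_
        rw [← hsplitM]
        exact inf_le_right
    have e1 : Submodule.comap E.subtype G = Submodule.comap E.subtype (E ⊓ G) :=
      (comap_inf_self E G).symm
    have e2 := congrArg (Submodule.comap E.subtype) hEM2.symm
    have e3 : Submodule.comap E.subtype (E ⊓ (M.filter (fun F => ¬ E ≤ F)).inf id)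
        = Submodule.comap E.subtype ((M.filter (fun F => ¬ E ≤ F)).inf id) :=
      comap_inf_self E _
    exact hE'G.trans ((e1.trans e2).trans e3)
  · rw [hfil, Finset.sum_image hinj]
    have hfrE' : finrank ℂ ↥E' = finrank ℂ ↥G := by
      rw [hE'G, finrank_comap, inf_eq_right.mpr hGE]
    rw [hfrE']
    have hterm : ∀ F ∈ M.filter (fun F => ¬ E ≤ F),
        finrank ℂ ↥E - finrank ℂ ↥(Submodule.comap E.subtype F)
          = finrank ℂ ↥E - finrank ℂ ↥(E ⊓ F) := fun F _ => by rw [finrank_comap]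
    rw [Finset.sum_congr rfl hterm]
    have hper : ∀ F ∈ M.filter (fun F => ¬ E ≤ F),
        (finrank ℂ ↥E - finrank ℂ ↥(E ⊓ F)) + finrank ℂ ↥(Eᗮ ⊓ Fᗮ) = finrank ℂ ↥(Fᗮ) := by
      intro F _
      have t1 := Submodule.finrank_add_finrank_orthogonal (E ⊓ F)
      rw [orth_inf E F] at t1
      have t2 := Submodule.finrank_sup_add_finrank_inf_eq Eᗮ Fᗮ
      have tE := Submodule.finrank_add_finrank_orthogonal E
      have tF := Submodule.finrank_add_finrank_orthogonal F
      have tle : finrank ℂ ↥(E ⊓ F) ≤ finrank ℂ ↥E := Submodule.finrank_mono inf_le_left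
      have tb : finrank ℂ ↥(Eᗮ ⊔ Fᗮ) ≤ finrank ℂ V := Submodule.finrank_le _
      omega
    have hsum1 : ∑ F ∈ M.filter (fun F => ¬ E ≤ F),
        ((finrank ℂ ↥E - finrank ℂ ↥(E ⊓ F)) + finrank ℂ ↥(Eᗮ ⊓ Fᗮ))
        = ∑ F ∈ M.filter (fun F => ¬ E ≤ F), finrank ℂ ↥(Fᗮ) := Finset.sum_congr rfl hper
    rw [Finset.sum_add_distrib] at hsum1
    have hMsum : finrank ℂ ↥(Gᗮ) = ∑ F ∈ M, finrank ℂ ↥(Fᗮ) := by rw [hGorth]; exact hstar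
    have hEsum : finrank ℂ ↥(Eᗮ) = ∑ F ∈ M, finrank ℂ ↥(Eᗮ ⊓ Fᗮ) := by
      conv_lhs => rw [hEorth]
      exact indep_sub M (fun F => Fᗮ) (fun F => Eᗮ ⊓ Fᗮ) (fun F _ => inf_le_right) hstar
    have hsplit1 : ∑ F ∈ M.filter (fun F => E ≤ F), finrank ℂ ↥(Fᗮ)
        + ∑ F ∈ M.filter (fun F => ¬ E ≤ F), finrank ℂ ↥(Fᗮ)
        = ∑ F ∈ M, finrank ℂ ↥(Fᗮ) :=
      Finset.sum_filter_add_sum_filter_not M _ _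
    have hsplit2 : ∑ F ∈ M.filter (fun F => E ≤ F), finrank ℂ ↥(Eᗮ ⊓ Fᗮ)
        + ∑ F ∈ M.filter (fun F => ¬ E ≤ F), finrank ℂ ↥(Eᗮ ⊓ Fᗮ)
        = ∑ F ∈ M, finrank ℂ ↥(Eᗮ ⊓ Fᗮ) :=
      Finset.sum_filter_add_sum_filter_not M _ _
    have heq1 : ∑ F ∈ M.filter (fun F => E ≤ F), finrank ℂ ↥(Eᗮ ⊓ Fᗮ)
        = ∑ F ∈ M.filter (fun F => E ≤ F), finrank ℂ ↥(Fᗮ) := by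
      refine Finset.sum_congr rfl fun F hF => ?_
      have hEF : E ≤ F := (Finset.mem_filter.mp hF).2
      rw [inf_eq_right.mpr (Submodule.orthogonal_le hEF)]
    have tG := Submodule.finrank_add_finrank_orthogonal G
    have tE := Submodule.finrank_add_finrank_orthogonal E
    have tmono : finrank ℂ ↥G ≤ finrank ℂ ↥E := Submodule.finrank_mono hGE
    omega
  · intro H' hH' hleH'
    obtain ⟨H, hH, rfl⟩ := Finset.mem_image.mp hH'
    obtain ⟨hHA, hHnE⟩ := Finset.mem_filter.mp hH
    have hGH : G ≤ H := (hkey H).mp hleH'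
    obtain ⟨F, hFM, hFH⟩ := hG3 H hHA hGH
    have hFnE : ¬ E ≤ F := fun h => hHnE (h.trans hFH)
    refine ⟨Submodule.comap E.subtype F, ?_, Submodule.comap_mono hFH⟩
    rw [hfil]
    exact Finset.mem_image.mpr ⟨F, Finset.mem_filter.mpr ⟨hFM, hFnE⟩, rfl⟩

lemma part2 (𝒜 S : Finset (Submodule ℂ V))
    (hStop : ∀ B ∈ S, B ≠ ⊤)
    (hbuild : IsBuildingSet 𝒜 S) (E : Submodule ℂ V) :
    IsBuildingSet ((𝒜.filter (fun H => E ≤ H)).image (Submodule.comap (Eᗮ).subtype))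
      ((S.filter (fun B => E ≤ B ∧ ¬ Eᗮ ≤ B)).image (Submodule.comap (Eᗮ).subtype)) := by
  classical
  intro E'' hE''
  obtain ⟨T', hT'sub, hT'ne, hT'eq⟩ := hE''
  set S'' := (S.filter (fun B => E ≤ B ∧ ¬ Eᗮ ≤ B)).image (Submodule.comap (Eᗮ).subtype)
    with hS''
  set T : Finset (Submodule ℂ V) :=
    (𝒜.filter (fun H => E ≤ H)).filter (fun H => Submodule.comap (Eᗮ).subtype H ∈ T')
    with hTdef
  have hT'img : T' = T.image (Submodule.comap (Eᗮ).subtype) := by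
    ext X
    constructor
    · intro hX
      obtain ⟨H, hH, hHX⟩ := Finset.mem_image.mp (hT'sub hX)
      exact Finset.mem_image.mpr ⟨H, Finset.mem_filter.mpr ⟨hH, hHX ▸ hX⟩, hHX⟩
    · intro hX
      obtain ⟨H, hH, rfl⟩ := Finset.mem_image.mp hX
      exact (Finset.mem_filter.mp hH).2
  set G : Submodule ℂ V := T.inf id with hGdef
  have hTne : T.Nonempty := by
    rw [hT'img] at hT'ne
    exact Finset.image_nonempty.mp hT'ne
  have hEG : E ≤ G :=
    Finset.le_inf fun H hH => (Finset.mem_filter.mp (Finset.mem_filter.mp hH).1).2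
  have hGQ : QMem 𝒜 G :=
    ⟨T, (Finset.filter_subset _ _).trans (Finset.filter_subset _ _), hTne, hGdef⟩
  have hE''G : E'' = Submodule.comap (Eᗮ).subtype G := by
    rw [hT'eq, hT'img, inf_image_comap]
  obtain ⟨hG1, hG2, hG3⟩ := hbuild G hGQ
  set M := S.filter (fun F => G ≤ F ∧ ∀ F' ∈ S, G ≤ F' → F' ≤ F → F' = F) with hMdef
  have hGleM : ∀ F ∈ M, G ≤ F := fun F hF => (Finset.mem_filter.mp hF).2.1
  have hMS : ∀ F ∈ M, F ∈ S := fun F hF => (Finset.mem_filter.mp hF).1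
  have hEleM : ∀ F ∈ M, E ≤ F := fun F hF => hEG.trans (hGleM F hF)
  have hMP : ∀ F ∈ M, E ≤ F ∧ ¬ Eᗮ ≤ F := by
    intro F hF
    refine ⟨hEleM F hF, fun hEo => hStop F (hMS F hF) ?_⟩
    refine top_unique ?_
    rw [← Submodule.sup_orthogonal_of_hasOrthogonalProjection (K := E)]
    exact sup_le (hEleM F hF) hEo
  have hcover : ∀ B ∈ S, G ≤ B → ∃ F ∈ M, F ≤ B := fun B hB hGB =>
    exists_min S G (finrank ℂ B) B le_rfl hB hGB
  have hkey : ∀ B : Submodule ℂ V, E ≤ B →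
      (E'' ≤ Submodule.comap (Eᗮ).subtype B ↔ G ≤ B) := by
    intro B hEB
    rw [hE''G, comap_le_comap]
    exact ⟨fun h => orderemb hEG hEB h, fun h => inf_le_inf_left _ h⟩
  have hinj : ∀ x ∈ M, ∀ y ∈ M,
      Submodule.comap (Eᗮ).subtype x = Submodule.comap (Eᗮ).subtype y → x = y := by
    intro x hx y hy h
    have h1 := comap_inj Eᗮ x y h
    exact le_antisymm (orderemb (hEleM x hx) (hEleM y hy) h1.le)
      (orderemb (hEleM y hy) (hEleM x hx) h1.ge)
  have hfil : S''.filter (fun F => E'' ≤ F ∧ ∀ F'' ∈ S'', E'' ≤ F'' → F'' ≤ F → F'' = F)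
      = M.image (Submodule.comap (Eᗮ).subtype) := by
    ext X
    constructor
    · intro hX
      obtain ⟨hXS, hE''X, hminX⟩ := Finset.mem_filter.mp hX
      obtain ⟨B, hB, rfl⟩ := Finset.mem_image.mp hXS
      obtain ⟨hBS, hBP⟩ := Finset.mem_filter.mp hB
      have hGB : G ≤ B := (hkey B hBP.1).mp hE''X
      obtain ⟨F, hFM, hFB⟩ := hcover B hBS hGB
      have hFS'' : Submodule.comap (Eᗮ).subtype F ∈ S'' :=
        Finset.mem_image.mpr ⟨F, Finset.mem_filter.mpr ⟨hMS F hFM, hMP F hFM⟩, rfl⟩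
      have heq := hminX _ hFS'' ((hkey F (hEleM F hFM)).mpr (hGleM F hFM))
        (Submodule.comap_mono hFB)
      exact Finset.mem_image.mpr ⟨F, hFM, heq⟩
    · intro hX
      obtain ⟨F, hFM, rfl⟩ := Finset.mem_image.mp hX
      refine Finset.mem_filter.mpr ⟨Finset.mem_image.mpr
        ⟨F, Finset.mem_filter.mpr ⟨hMS F hFM, hMP F hFM⟩, rfl⟩,
        (hkey F (hEleM F hFM)).mpr (hGleM F hFM), ?_⟩
      intro X' hX'S hE''X' hX'F
      obtain ⟨B, hB, rfl⟩ := Finset.mem_image.mp hX'S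
      obtain ⟨hBS, hBP⟩ := Finset.mem_filter.mp hB
      have hGB : G ≤ B := (hkey B hBP.1).mp hE''X'
      have hBF : B ≤ F := orderemb hBP.1 (hEleM F hFM) ((comap_le_comap Eᗮ B F).mp hX'F)
      have hBeqF := (Finset.mem_filter.mp hFM).2.2 B hBS hGB hBF
      rw [hBeqF]
  refine ⟨?_, ?_, ?_⟩
  · rw [hfil, inf_image_comap, ← hG1, ← hE''G]
  · rw [hfil, Finset.sum_image hinj]
    have hfrE'' : finrank ℂ ↥E'' = finrank ℂ ↥(Eᗮ ⊓ G) := by rw [hE''G, finrank_comap]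
    rw [hfrE'']
    have hterm : ∀ F ∈ M, finrank ℂ ↥(Eᗮ) - finrank ℂ ↥(Submodule.comap (Eᗮ).subtype F)
        = finrank ℂ V - finrank ℂ ↥F := by
      intro F hF
      rw [finrank_comap]
      have h1 := finrank_split (hEleM F hF)
      have h2 := Submodule.finrank_add_finrank_orthogonal E
      have h3 : finrank ℂ ↥F ≤ finrank ℂ V := Submodule.finrank_le F
      omega
    rw [Finset.sum_congr rfl hterm]
    have h1 := finrank_split hEG
    have h2 := Submodule.finrank_add_finrank_orthogonal E
    have h3 : finrank ℂ ↥G ≤ finrank ℂ V := Submodule.finrank_le G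
    have h4 : finrank ℂ ↥(Eᗮ) - finrank ℂ ↥(Eᗮ ⊓ G) = finrank ℂ V - finrank ℂ ↥G := by omega
    rw [h4]
    exact hG2
  · intro H' hH' hle
    obtain ⟨H, hH, rfl⟩ := Finset.mem_image.mp hH'
    obtain ⟨hHA, hHE⟩ := Finset.mem_filter.mp hH
    have hGH : G ≤ H := (hkey H hHE).mp hle
    obtain ⟨F, hFM, hFH⟩ := hG3 H hHA hGH
    refine ⟨Submodule.comap (Eᗮ).subtype F, ?_, Submodule.comap_mono hFH⟩
    rw [hfil]
    exact Finset.mem_image.mpr ⟨F, hFM, rfl⟩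

end St7Aux

open CxArr in
/-- If `S` is a building set for a central essential arrangement `𝒜` with
`Q(S) = Q(𝒜)`, then for every `E ∈ Q(𝒜)`:
(1) `S^E = {B ∩ E : B ∈ S ∖ S_E}` is a building set for the restriction
    `𝒜^E = {H ∩ E : H ∈ 𝒜, E ⊄ H}` (an arrangement in `E`), and
(2) `S^{E^⊥}_E = {B ∩ E^⊥ : B ∈ S_E ∖ (S_E ∩ S_{E^⊥})}` is a building set for the normal
    arrangement `𝒜_{V/E} = {H ∩ E^⊥ : H ∈ 𝒜, E ⊆ H}` (identifying `V/E` with `E^⊥`). -/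
theorem statement_7 {V : Type} [NormedAddCommGroup V] [InnerProductSpace ℂ V]
    [FiniteDimensional ℂ V] (𝒜 S : Finset (Submodule ℂ V))
    (hhyp : ∀ H ∈ 𝒜, IsCoatom H) (hess : 𝒜.inf id = ⊥)
    (hQSQ : {E : Submodule ℂ V | ∃ T : Finset (Submodule ℂ V), T ⊆ S ∧ T.Nonempty ∧ E = T.inf id}
      = {E : Submodule ℂ V | QMem 𝒜 E})
    (hbuild : IsBuildingSet 𝒜 S)
    (E : Submodule ℂ V) (hE : QMem 𝒜 E) :
    IsBuildingSet ((𝒜.filter (fun H => ¬ E ≤ H)).image (Submodule.comap E.subtype))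
      ((S.filter (fun B => ¬ E ≤ B)).image (Submodule.comap E.subtype)) ∧
    IsBuildingSet ((𝒜.filter (fun H => E ≤ H)).image (Submodule.comap (Eᗮ).subtype))
      ((S.filter (fun B => E ≤ B ∧ ¬ Eᗮ ≤ B)).image (Submodule.comap (Eᗮ).subtype)) := by
  have hStop : ∀ B ∈ S, B ≠ ⊤ := by
    intro B hB htop
    have hQ : QMem 𝒜 B := by
      have hmem : B ∈ {E : Submodule ℂ V |
          ∃ T : Finset (Submodule ℂ V), T ⊆ S ∧ T.Nonempty ∧ E = T.inf id} :=
        ⟨{B}, Finset.singleton_subset_iff.mpr hB, ⟨B, Finset.mem_singleton_self B⟩, by simp⟩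
      rw [hQSQ] at hmem
      exact hmem
    obtain ⟨TT, hTTsub, ⟨H, hH⟩, hBeq⟩ := hQ
    have hBH : B ≤ H := by
      rw [hBeq]
      exact Finset.inf_le hH
    rw [htop] at hBH
    exact (hhyp H (hTTsub hH)).1 (top_unique hBH)
  exact ⟨St7Aux.part1 𝒜 S hbuild E hE, St7Aux.part2 𝒜 S hStop hbuild E⟩

end
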